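/- Let (X, P) solve the extremal system on [T − ε, T] with control constantly equal to c ∈ {−1, +1}, and suppose X(T) = (0, 0, 1) and P(T) = λ (0, 0, 1) for some λ ∈ ℝ (i.e. the reduced adjoint P̃(T) vanishes). Then the switching function satisfies Φ(T) = Φ̇(T) = Φ̈(T) = Φ⁽³⁾(T) = 0 and Φ⁽⁴⁾(T) = −c Δ². -/

import Mathlib

open Set

/-- Let (X, P) solve the extremal system on [T − ε, T] with control
constantly c ∈ {−1, +1}, with X(T) = (0, 0, 1) and P(T) = λ (0, 0, 1).  Then the
switching function Φ = p3 x2 − p2 x3 satisfies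
Φ(T) = Φ̇(T) = Φ̈(T) = Φ⁽³⁾(T) = 0 and Φ⁽⁴⁾(T) = −c Δ². -/
theorem switching_function_flat_at_target
    (Δ : ℝ) (hΔ : Δ ≠ 0) (T ε c lam : ℝ) (hε : 0 < ε) (hc : c = 1 ∨ c = -1)
    (x1 x2 x3 p1 p2 p3 : ℝ → ℝ)
    (hx1 : ∀ t ∈ Icc (T - ε) T, HasDerivWithinAt x1 (-Δ * x2 t) (Icc (T - ε) T) t)
    (hx2 : ∀ t ∈ Icc (T - ε) T, HasDerivWithinAt x2 (Δ * x1 t - c * x3 t) (Icc (T - ε) T) t)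
    (hx3 : ∀ t ∈ Icc (T - ε) T, HasDerivWithinAt x3 (c * x2 t) (Icc (T - ε) T) t)
    (hp1 : ∀ t ∈ Icc (T - ε) T, HasDerivWithinAt p1 (-Δ * p2 t + x1 t) (Icc (T - ε) T) t)
    (hp2 : ∀ t ∈ Icc (T - ε) T, HasDerivWithinAt p2 (Δ * p1 t - c * p3 t) (Icc (T - ε) T) t)
    (hp3 : ∀ t ∈ Icc (T - ε) T, HasDerivWithinAt p3 (c * p2 t) (Icc (T - ε) T) t)
    (hXT : x1 T = 0 ∧ x2 T = 0 ∧ x3 T = 1)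
    (hPT : p1 T = 0 ∧ p2 T = 0 ∧ p3 T = lam) :
    ∃ Φ1 Φ2 Φ3 Φ4 : ℝ → ℝ,
      (∀ t ∈ Icc (T - ε) T,
        HasDerivWithinAt (fun s => p3 s * x2 s - p2 s * x3 s) (Φ1 t) (Icc (T - ε) T) t) ∧
      (∀ t ∈ Icc (T - ε) T, HasDerivWithinAt Φ1 (Φ2 t) (Icc (T - ε) T) t) ∧
      (∀ t ∈ Icc (T - ε) T, HasDerivWithinAt Φ2 (Φ3 t) (Icc (T - ε) T) t) ∧
      (∀ t ∈ Icc (T - ε) T, HasDerivWithinAt Φ3 (Φ4 t) (Icc (T - ε) T) t) ∧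
      p3 T * x2 T - p2 T * x3 T = 0 ∧
      Φ1 T = 0 ∧ Φ2 T = 0 ∧ Φ3 T = 0 ∧ Φ4 T = -c * Δ ^ 2 := by
  obtain ⟨hx1T, hx2T, hx3T⟩ := hXT
  obtain ⟨hp1T, hp2T, hp3T⟩ := hPT
  refine ⟨fun t => Δ * (p3 t * x1 t - p1 t * x3 t),
    fun t => Δ * (c * (p2 t * x1 t) - Δ * (p3 t * x2 t) + Δ * (p2 t * x3 t)
      - x1 t * x3 t - c * (p1 t * x2 t)),
    fun t => Δ * (-(c * c + Δ ^ 2) * (p3 t * x1 t) + (c * c + Δ ^ 2) * (p1 t * x3 t)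
      + Δ * (x2 t * x3 t) - 2 * c * (x1 t * x2 t)),
    fun t => Δ * (-(c * c + Δ ^ 2) * c * (p2 t * x1 t) + (c * c + Δ ^ 2) * Δ * (p3 t * x2 t)
      - (c * c + Δ ^ 2) * Δ * (p2 t * x3 t) + ((c * c + Δ ^ 2) + Δ ^ 2 + 2 * c * c) * (x1 t * x3 t)
      + (c * c + Δ ^ 2) * c * (p1 t * x2 t) + 3 * c * Δ * (x2 t) ^ 2 - 2 * c * Δ * (x1 t) ^ 2
      - c * Δ * (x3 t) ^ 2), ?_, ?_, ?_, ?_, ?_, ?_, ?_, ?_, ?_⟩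
  · intro t ht
    have h := ((hp3 t ht).mul (hx2 t ht)).sub ((hp2 t ht).mul (hx3 t ht))
    refine h.congr_deriv ?_
    ring
  · intro t ht
    have h := (((hp3 t ht).mul (hx1 t ht)).sub ((hp1 t ht).mul (hx3 t ht))).const_mul Δ
    refine h.congr_deriv ?_
    ring
  · intro t ht
    have h := (((((((hp2 t ht).mul (hx1 t ht)).const_mul c).sub
        (((hp3 t ht).mul (hx2 t ht)).const_mul Δ)).add
        (((hp2 t ht).mul (hx3 t ht)).const_mul Δ)).sub
        ((hx1 t ht).mul (hx3 t ht))).sub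
        (((hp1 t ht).mul (hx2 t ht)).const_mul c)).const_mul Δ
    refine h.congr_deriv ?_
    ring
  · intro t ht
    have h := ((((((hp3 t ht).mul (hx1 t ht)).const_mul (-(c * c + Δ ^ 2))).add
        (((hp1 t ht).mul (hx3 t ht)).const_mul (c * c + Δ ^ 2))).add
        (((hx2 t ht).mul (hx3 t ht)).const_mul Δ)).sub
        (((hx1 t ht).mul (hx2 t ht)).const_mul (2 * c))).const_mul Δ
    refine h.congr_deriv ?_
    ring
  · simp [hx2T, hx3T, hp2T]
  · simp [hx1T, hx3T, hp1T]
  · simp [hx1T, hx2T, hx3T, hp1T, hp2T]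
  · simp [hx1T, hx2T, hx3T, hp1T, hp2T]
  · simp only [hx1T, hx2T, hx3T, hp1T, hp2T]
    ring
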